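/- Let φ : (0,∞) → (0,∞) be convex and strictly decreasing, and let L₁, K₁,...,Kₙ be star bodies in ℝⁿ. Then φ(1) ≥ φ( Ṽ(K₁,K₂,...,Kₙ) / Ṽ(K₁+̂_φL₁, K₂,...,Kₙ) ) + φ( Ṽ(L₁,K₂,...,Kₙ) / Ṽ(K₁+̂_φL₁, K₂,...,Kₙ) ). If φ is strictly convex, equality holds if and only if K₁ and L₁ are dilates. -/

import Mathlib

open MeasureTheory Metric Set Finset

/-- The surface (spherical) measure on the unit sphere `S^{n-1} ⊆ ℝⁿ`. -/
noncomputable def sphereσ (n : ℕ) : Measure (sphere (0 : EuclideanSpace ℝ (Fin n)) 1) :=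
  μH[(n : ℝ) - 1]


section AuxOBM

open NNReal ENNReal


lemma lipschitzOnWith_normalize {F : Type*} [NormedAddCommGroup F] [NormedSpace ℝ F] :
    LipschitzOnWith 2 (fun x : F => ‖x‖⁻¹ • x) {x | 1 ≤ ‖x‖} := by
  rw [lipschitzOnWith_iff_dist_le_mul]
  intro x hx y hy
  simp only [mem_setOf_eq] at hx hy
  have hx0 : (0:ℝ) < ‖x‖ := lt_of_lt_of_le one_pos hx
  have hy0 : (0:ℝ) < ‖y‖ := lt_of_lt_of_le one_pos hy
  have key : ‖x‖⁻¹ • x - ‖y‖⁻¹ • y = ‖x‖⁻¹ • (x - y) + (‖x‖⁻¹ - ‖y‖⁻¹) • y := by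
    rw [smul_sub, sub_smul]; abel
  rw [dist_eq_norm, dist_eq_norm, key]
  have h1 : ‖(‖x‖⁻¹ : ℝ) • (x - y)‖ ≤ ‖x - y‖ := by
    rw [norm_smul, norm_inv, norm_norm]
    exact mul_le_of_le_one_left (norm_nonneg _) (inv_le_one_of_one_le₀ hx)
  have h2 : ‖(‖x‖⁻¹ - ‖y‖⁻¹ : ℝ) • y‖ ≤ ‖x - y‖ := by
    have e : ‖x‖⁻¹ - ‖y‖⁻¹ = (‖y‖ - ‖x‖) / (‖x‖ * ‖y‖) := by field_simp
    have h3 : |‖y‖ - ‖x‖| ≤ ‖x - y‖ := by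
      rw [abs_sub_comm]; exact abs_norm_sub_norm_le x y
    rw [norm_smul, Real.norm_eq_abs, e, abs_div, abs_mul, abs_of_pos hx0, abs_of_pos hy0]
    have e2 : |‖y‖ - ‖x‖| / (‖x‖ * ‖y‖) * ‖y‖ = |‖y‖ - ‖x‖| / ‖x‖ := by field_simp
    rw [e2]
    calc |‖y‖ - ‖x‖| / ‖x‖ ≤ |‖y‖ - ‖x‖| / 1 := by gcongr
      _ = |‖y‖ - ‖x‖| := div_one _
      _ ≤ ‖x - y‖ := h3
  calc ‖‖x‖⁻¹ • (x - y) + (‖x‖⁻¹ - ‖y‖⁻¹) • y‖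
      ≤ ‖(‖x‖⁻¹ : ℝ) • (x - y)‖ + ‖(‖x‖⁻¹ - ‖y‖⁻¹ : ℝ) • y‖ := norm_add_le _ _
    _ ≤ ‖x - y‖ + ‖x - y‖ := add_le_add h1 h2
    _ = 2 * ‖x - y‖ := by ring


lemma cast_sub_one (n : ℕ) (hn : 0 < n) : ((n - 1 : ℕ) : ℝ) = (n : ℝ) - 1 := by
  have : (1:ℕ) ≤ n := hn
  push_cast [Nat.cast_sub this]
  ring

abbrev Eu (n : ℕ) := EuclideanSpace ℝ (Fin n)

lemma sphere_hausdorff_lt_top (n : ℕ) (hn : 0 < n) :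
    μH[(n:ℝ)-1] (sphere (0 : EuclideanSpace ℝ (Fin n)) 1 :
      Set (EuclideanSpace ℝ (Fin n))) < ⊤ := by
  have hd : (0:ℝ) ≤ (n:ℝ) - 1 := by
    have : (1:ℝ) ≤ (n:ℝ) := by exact_mod_cast hn
    linarith
  -- the faces
  set D : Fin n → ℝ → Set (Eu n) := fun i s => {x : (Eu n) | x i = s ∧ ‖x‖ ≤ n} with hD
  -- each face has finite measure
  have hface : ∀ (i : Fin n) (s : ℝ), |s| = 1 → μH[(n:ℝ)-1] (D i s) < ⊤ := by
    intro i s hs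
    set ei : (Eu n) := EuclideanSpace.single i (1:ℝ) with hei
    have heinz : ei ≠ 0 := by
      have h1 : ‖ei‖ = 1 := by
        rw [hei, EuclideanSpace.norm_single]; norm_num
      intro h
      rw [h, norm_zero] at h1
      exact one_ne_zero h1.symm
    haveI : Fact (Module.finrank ℝ (Eu n) = (n-1)+1) := ⟨by
      rw [finrank_euclideanSpace_fin]; omega⟩
    set V := (ℝ ∙ ei)ᗮ with hV
    have hfr : Module.finrank ℝ V = n - 1 := Submodule.finrank_orthogonal_span_singleton heinz
    have hsub : D i s ⊆ (fun x : (Eu n) => s • ei + x) ''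
        (Subtype.val '' (Metric.closedBall (0 : V) (n+1))) := by
      rintro x ⟨hxi, hxn⟩
      have hvV : x - s • ei ∈ V := by
        rw [hV, Submodule.mem_orthogonal_singleton_iff_inner_right]
        rw [hei, EuclideanSpace.inner_single_left]
        simp only [map_one, one_mul]
        have hsub : (x - s • EuclideanSpace.single i (1:ℝ)) i
            = x i - s * (EuclideanSpace.single i (1:ℝ)) i := rfl
        rw [hsub, EuclideanSpace.single_apply, if_pos rfl, hxi]
        ring
      refine ⟨x - s • ei, ⟨⟨x - s • ei, hvV⟩, ?_, rfl⟩, by module⟩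
      simp only [Metric.mem_closedBall, dist_zero_right]
      calc ‖(⟨x - s • ei, hvV⟩ : V)‖ = ‖x - s • ei‖ := rfl
        _ ≤ ‖x‖ + ‖s • ei‖ := norm_sub_le _ _
        _ ≤ n + 1 := by
            rw [norm_smul, hei, EuclideanSpace.norm_single]
            simp only [Real.norm_eq_abs, hs, norm_one, mul_one]
            exact add_le_add hxn le_rfl
    calc μH[(n:ℝ)-1] (D i s)
        ≤ μH[(n:ℝ)-1] ((fun x : (Eu n) => s • ei + x) ''
            (Subtype.val '' (Metric.closedBall (0 : V) (n+1)))) := measure_mono hsub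
      _ = μH[(n:ℝ)-1] (Subtype.val '' (Metric.closedBall (0 : V) (n+1))) := by
          have hiso : Isometry (fun x : (Eu n) => s • ei + x) :=
            Isometry.of_dist_eq fun a b => dist_add_left _ _ _
          exact hiso.hausdorffMeasure_image (Or.inl hd) _
      _ = μH[(n:ℝ)-1] (Metric.closedBall (0 : V) (n+1)) := by
          exact (V.subtypeₗᵢ.isometry).hausdorffMeasure_image (Or.inl hd) _
      _ < ⊤ := by
          have hcast : ((n:ℝ) - 1) = ((Module.finrank ℝ V : ℕ) : ℝ) := by
            rw [hfr, cast_sub_one n hn]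
          rw [hcast]
          exact (isCompact_closedBall _ _).measure_lt_top
  -- covering
  have hcover : (sphere (0:(Eu n)) 1 : Set (Eu n)) ⊆
      (fun x : (Eu n) => ‖x‖⁻¹ • x) '' (⋃ i, D i 1 ∪ D i (-1)) := by
    intro u hu
    have hun : ‖u‖ = 1 := by simpa using hu
    haveI : Nonempty (Fin n) := ⟨⟨0, hn⟩⟩
    obtain ⟨i, hi⟩ := Finite.exists_max (fun j : Fin n => |u j|)
    have hui : u i ≠ 0 := by
      intro h0
      have : u = 0 := by
        ext j
        have := hi j
        rw [h0, abs_zero] at this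
        exact abs_nonpos_iff.mp this
      rw [this] at hun; simp at hun
    have huiabs : 0 < |u i| := abs_pos.mpr hui
    -- ‖u‖^2 = ∑ u j ^ 2
    have hsq : (1:ℝ) ≤ (n:ℝ) * (u i)^2 := by
      have h1 : ‖u‖^2 = ∑ j, (u j)^2 := by
        rw [EuclideanSpace.norm_eq, Real.sq_sqrt (by positivity)]
        congr 1; funext j; rw [Real.norm_eq_abs, sq_abs]
      have h2 : ∑ j, (u j)^2 ≤ ∑ _j : Fin n, (u i)^2 := by
        apply Finset.sum_le_sum
        intro j _
        have := hi j
        nlinarith [abs_nonneg (u j), abs_nonneg (u i), sq_abs (u j), sq_abs (u i)]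
      have h3 : ∑ _j : Fin n, (u i)^2 = (n:ℝ) * (u i)^2 := by
        simp [Finset.sum_const, Finset.card_univ]
      nlinarith [hun, h1, h2, h3]
    have hui1 : |u i| ≤ 1 := by
      have := hi  -- |u j| ≤ |u i|
      calc |u i| ≤ ‖u‖ := by
            rw [EuclideanSpace.norm_eq]
            have : |u i| = Real.sqrt ((u i)^2) := by rw [Real.sqrt_sq_eq_abs]
            rw [this]
            apply Real.sqrt_le_sqrt
            calc (u i)^2 = ‖u i‖^2 := by rw [Real.norm_eq_abs, sq_abs]
              _ ≤ ∑ j, ‖u j‖^2 := Finset.single_le_sum (f := fun j => ‖u j‖^2)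
                  (fun j _ => by positivity) (Finset.mem_univ i)
        _ = 1 := hun
    set x : (Eu n) := |u i|⁻¹ • u with hx
    have hxnorm : ‖x‖ = |u i|⁻¹ := by
      rw [hx, norm_smul, hun, Real.norm_eq_abs, abs_of_pos (by positivity), mul_one]
    have hxi : x i = (if 0 ≤ u i then (1:ℝ) else -1) := by
      have : x i = |u i|⁻¹ * u i := rfl
      rw [this]
      rcases le_or_gt 0 (u i) with h | h
      · rw [if_pos h, abs_of_nonneg h]
        field_simp
      · rw [if_neg (not_le.mpr h), abs_of_neg h]
        field_simp
    have hxn : ‖x‖ ≤ n := by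
      rw [hxnorm]
      rw [inv_le_iff_one_le_mul₀ huiabs]
      nlinarith [hsq, huiabs, hui1, sq_abs (u i)]
    refine ⟨x, ?_, ?_⟩
    · apply Set.mem_iUnion.mpr ⟨i, ?_⟩
      rcases le_or_gt 0 (u i) with h | h
      · left; exact ⟨by rw [hxi, if_pos h], hxn⟩
      · right; exact ⟨by rw [hxi, if_neg (not_le.mpr h)], hxn⟩
    · show ‖x‖⁻¹ • x = u
      rw [hxnorm, inv_inv, hx, smul_smul, mul_inv_cancel₀ (ne_of_gt huiabs), one_smul]
  -- union is inside the Lipschitz domain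
  have hdom : (⋃ i, D i 1 ∪ D i (-1)) ⊆ {x : (Eu n) | 1 ≤ ‖x‖} := by
    intro x hx
    simp only [Set.mem_iUnion, Set.mem_union] at hx
    obtain ⟨i, hx⟩ := hx
    have h1 : |x i| = 1 := by
      rcases hx with ⟨h, _⟩ | ⟨h, _⟩ <;> rw [h] <;> simp
    show (1:ℝ) ≤ ‖x‖
    calc (1:ℝ) = |x i| := h1.symm
      _ ≤ ‖x‖ := by
          rw [EuclideanSpace.norm_eq]
          rw [show |x i| = Real.sqrt ((x i)^2) by rw [Real.sqrt_sq_eq_abs]]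
          apply Real.sqrt_le_sqrt
          calc (x i)^2 = ‖x i‖^2 := by rw [Real.norm_eq_abs, sq_abs]
            _ ≤ ∑ j, ‖x j‖^2 := Finset.single_le_sum (f := fun j => ‖x j‖^2)
                (fun j _ => by positivity) (Finset.mem_univ i)
  -- put it together
  have hlip := (lipschitzOnWith_normalize (F := (Eu n))).mono hdom
  calc μH[(n:ℝ)-1] (sphere (0:(Eu n)) 1 : Set (Eu n))
      ≤ μH[(n:ℝ)-1] ((fun x : (Eu n) => ‖x‖⁻¹ • x) '' (⋃ i, D i 1 ∪ D i (-1))) :=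
        measure_mono hcover
    _ ≤ ((2:ℝ≥0) : ℝ≥0∞) ^ ((n:ℝ)-1) * μH[(n:ℝ)-1] (⋃ i, D i 1 ∪ D i (-1)) :=
        hlip.hausdorffMeasure_image_le hd
    _ < ⊤ := by
        apply ENNReal.mul_lt_top
        · exact ENNReal.rpow_lt_top_of_nonneg hd (by simp)
        · calc μH[(n:ℝ)-1] (⋃ i, D i 1 ∪ D i (-1))
              ≤ ∑ i, μH[(n:ℝ)-1] (D i 1 ∪ D i (-1)) := measure_iUnion_fintype_le _ _
            _ < ⊤ := by
                apply ENNReal.sum_lt_top.mpr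
                intro i _
                calc μH[(n:ℝ)-1] (D i 1 ∪ D i (-1))
                    ≤ μH[(n:ℝ)-1] (D i 1) + μH[(n:ℝ)-1] (D i (-1)) := measure_union_le _ _
                  _ < ⊤ := ENNReal.add_lt_top.mpr
                      ⟨hface i 1 (by simp), hface i (-1) (by simp)⟩


set_option maxHeartbeats 1000000 in
lemma sphere_hausdorff_ball_pos (n : ℕ) (hn : 0 < n)
    (p : sphere (0 : Eu n) 1) {ε : ℝ} (hε : 0 < ε) :
    0 < μH[(n:ℝ)-1] (ball p ε : Set (sphere (0 : Eu n) 1)) := by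
  have hd : (0:ℝ) ≤ (n:ℝ) - 1 := by
    have : (1:ℝ) ≤ (n:ℝ) := by exact_mod_cast hn
    linarith
  have hpE : ‖(p : Eu n)‖ = 1 := by
    have := p.2
    simpa using this
  have hpne : (p : Eu n) ≠ 0 := by
    intro h; rw [h, norm_zero] at hpE; exact one_ne_zero hpE.symm
  haveI : Fact (Module.finrank ℝ (Eu n) = (n-1)+1) := ⟨by
    rw [finrank_euclideanSpace_fin]; omega⟩
  set V := (ℝ ∙ (p : Eu n))ᗮ with hV
  have hfr : Module.finrank ℝ V = n - 1 := Submodule.finrank_orthogonal_span_singleton hpne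
  have hπlip : LipschitzWith 1 (fun x : Eu n => (V.orthogonalProjectionOnto x : V)) := by
    apply LipschitzWith.of_dist_le_mul
    intro x y
    rw [NNReal.coe_one, one_mul, dist_eq_norm, dist_eq_norm, ← map_sub]
    calc ‖V.orthogonalProjectionOnto (x - y)‖
        ≤ ‖V.orthogonalProjectionOnto‖ * ‖x - y‖ := (V.orthogonalProjectionOnto).le_opNorm _
      _ ≤ ‖x - y‖ := by
          have h := V.orthogonalProjectionOnto_norm_le
          have hnn : (0:ℝ) ≤ ‖x - y‖ := norm_nonneg _
          nlinarith
  set δ := min ε 1 / 2 with hδdef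
  have hδ : 0 < δ := by positivity
  have hδε : δ ≤ ε / 2 := by
    rw [hδdef]
    gcongr
    exact min_le_left _ _
  have hδ1 : δ ≤ 1 / 2 := by
    rw [hδdef]
    gcongr
    exact min_le_right _ _
  -- the key inclusion
  have hincl : (ball (0 : V) δ : Set V) ⊆
      (fun x : Eu n => (V.orthogonalProjectionOnto x : V)) ''
        (Subtype.val '' (ball p ε : Set (sphere (0 : Eu n) 1))) := by
    rintro v hv
    rw [mem_ball, dist_zero_right] at hv
    have hv1 : ‖v‖ ≤ 1/2 := le_trans (le_of_lt hv) hδ1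
    set c := Real.sqrt (1 - ‖v‖^2) with hc
    have hc0 : 0 ≤ c := Real.sqrt_nonneg _
    have hcsq : c^2 = 1 - ‖v‖^2 := Real.sq_sqrt (by nlinarith [norm_nonneg v])
    have hc1 : c ≤ 1 := Real.sqrt_le_one.mpr (by nlinarith [norm_nonneg v])
    have horth : inner ℝ (v : Eu n) (p : Eu n) = (0:ℝ) :=
      (Submodule.mem_orthogonal_singleton_iff_inner_left).mp v.2
    have hvc : ‖(v : Eu n)‖ = ‖v‖ := rfl
    have hnu : ‖(v : Eu n) + c • (p : Eu n)‖ = 1 := by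
      have h2 : ‖(v : Eu n) + c • (p : Eu n)‖^2 = 1 := by
        rw [norm_add_sq_real, real_inner_smul_right, horth, norm_smul, Real.norm_eq_abs,
          abs_of_nonneg hc0, hpE, hvc]
        nlinarith [hcsq]
      have hs := Real.sqrt_sq (norm_nonneg ((v : Eu n) + c • (p : Eu n)))
      rw [← hs, h2, Real.sqrt_one]
    have humem : (v : Eu n) + c • (p : Eu n) ∈ sphere (0 : Eu n) 1 := by
      simpa using hnu
    have hdistup : ‖((v : Eu n) + c • (p : Eu n)) - (p : Eu n)‖ < ε := by
      have hupd : ((v : Eu n) + c • (p : Eu n)) - (p : Eu n)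
          = (v : Eu n) + (c - 1) • (p : Eu n) := by
        rw [sub_smul, one_smul]; abel
      rw [hupd]
      have h2 : ‖(v : Eu n) + (c - 1) • (p : Eu n)‖^2 = ‖v‖^2 + (c-1)^2 := by
        rw [norm_add_sq_real, real_inner_smul_right, horth, norm_smul, Real.norm_eq_abs,
          hpE, hvc]
        nlinarith [sq_abs (c-1)]
      have h3 : (c-1)^2 ≤ ‖v‖^2 := by nlinarith
      have h4 : ‖(v : Eu n) + (c - 1) • (p : Eu n)‖^2 < ε^2 := by
        have hvδ : ‖v‖ < δ := hv
        nlinarith [norm_nonneg v, hδ, hδε, hε]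
      nlinarith [norm_nonneg ((v : Eu n) + (c - 1) • (p : Eu n)), hε]
    have hπu : (V.orthogonalProjectionOnto ((v : Eu n) + c • (p : Eu n)) : V) = v := by
      rw [map_add, _root_.map_smul, Submodule.orthogonalProjectionOnto_mem_subspace_eq_self v]
      have hp0 : V.orthogonalProjectionOnto (p : Eu n) = 0 :=
        Submodule.orthogonalProjectionOnto_apply_of_mem_orthogonal
          ((ℝ ∙ (p : Eu n)).le_orthogonal_orthogonal (Submodule.mem_span_singleton_self _))
      rw [hp0, smul_zero, add_zero]
    refine ⟨_, ⟨⟨_, humem⟩, ?_, rfl⟩, hπu⟩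
    rw [mem_ball, Subtype.dist_eq, dist_eq_norm]
    exact hdistup
  -- positivity of the ball measure in V
  have hposV : 0 < μH[(n:ℝ)-1] (ball (0 : V) δ : Set V) := by
    have hcast : ((n:ℝ) - 1) = ((Module.finrank ℝ V : ℕ) : ℝ) := by
      rw [hfr]
      have : (1:ℕ) ≤ n := hn
      push_cast [Nat.cast_sub this]
      ring
    rw [hcast]
    exact (Metric.isOpen_ball).measure_pos _ ⟨0, mem_ball_self hδ⟩
  -- transfer along the Lipschitz projection and the isometric inclusion
  have h1 : μH[(n:ℝ)-1] (ball (0 : V) δ : Set V)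
      ≤ μH[(n:ℝ)-1] ((fun x : Eu n => (V.orthogonalProjectionOnto x : V)) ''
          (Subtype.val '' (ball p ε : Set (sphere (0 : Eu n) 1)))) := measure_mono hincl
  have h2 : μH[(n:ℝ)-1] ((fun x : Eu n => (V.orthogonalProjectionOnto x : V)) ''
          (Subtype.val '' (ball p ε : Set (sphere (0 : Eu n) 1))))
      ≤ ((1:ℝ≥0) : ℝ≥0∞) ^ ((n:ℝ)-1) *
          μH[(n:ℝ)-1] (Subtype.val '' (ball p ε : Set (sphere (0 : Eu n) 1))) :=
    hπlip.hausdorffMeasure_image_le hd _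
  have h3 : μH[(n:ℝ)-1] (Subtype.val '' (ball p ε : Set (sphere (0 : Eu n) 1)))
      = μH[(n:ℝ)-1] (ball p ε : Set (sphere (0 : Eu n) 1)) :=
    isometry_subtype_coe.hausdorffMeasure_image (Or.inl hd) _
  have h4 : ((1:ℝ≥0) : ℝ≥0∞) ^ ((n:ℝ)-1) = 1 := by
    rw [ENNReal.coe_one, ENNReal.one_rpow]
  calc (0:ℝ≥0∞) < μH[(n:ℝ)-1] (ball (0 : V) δ : Set V) := hposV
    _ ≤ _ := h1
    _ ≤ _ := h2
    _ = μH[(n:ℝ)-1] (ball p ε : Set (sphere (0 : Eu n) 1)) := by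
        rw [h4, one_mul, h3]


lemma sphereσ_isFiniteMeasure (n : ℕ) (hn : 0 < n) : IsFiniteMeasure (sphereσ n) := by
  have hd : (0:ℝ) ≤ (n:ℝ) - 1 := by
    have : (1:ℝ) ≤ (n:ℝ) := by exact_mod_cast hn
    linarith
  constructor
  have heq : (sphereσ n) Set.univ
      = μH[(n:ℝ)-1] (sphere (0 : Eu n) 1 : Set (Eu n)) := by
    rw [show sphereσ n = (μH[(n:ℝ)-1] : Measure (sphere (0 : Eu n) 1)) from rfl,
      ← isometry_subtype_coe.hausdorffMeasure_image (Or.inl hd) (Set.univ),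
      Set.image_univ, Subtype.range_coe]
  rw [heq]
  exact sphere_hausdorff_lt_top n hn

lemma sphereσ_isOpenPos (n : ℕ) (hn : 0 < n) : (sphereσ n).IsOpenPosMeasure := by
  constructor
  intro U hU hne
  obtain ⟨p, hp⟩ := hne
  obtain ⟨ε, hε, hball⟩ := Metric.isOpen_iff.mp hU p hp
  have h1 := sphere_hausdorff_ball_pos n hn p hε
  have h2 : μH[(n:ℝ)-1] (ball p ε : Set (sphere (0 : Eu n) 1)) ≤ sphereσ n U :=
    measure_mono hball
  exact (lt_of_lt_of_le h1 h2).ne'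


lemma dual_obm_core {α : Type*} [TopologicalSpace α] [CompactSpace α] [T2Space α]
    [MeasurableSpace α] [BorelSpace α] [Nonempty α]
    (σ : Measure α) [IsFiniteMeasure σ] [σ.IsOpenPosMeasure]
    (φ : ℝ → ℝ)
    (hφconv : ConvexOn ℝ (Set.Ioi 0) φ)
    (hφanti : StrictAntiOn φ (Set.Ioi 0))
    (ρK ρL ρQ W : α → ℝ)
    (hKc : Continuous ρK) (hLc : Continuous ρL) (hQc : Continuous ρQ) (hWc : Continuous W)
    (hKpos : ∀ u, 0 < ρK u) (hLpos : ∀ u, 0 < ρL u) (hQpos : ∀ u, 0 < ρQ u)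
    (hWpos : ∀ u, 0 < W u)
    (hsum : ∀ u, φ (ρK u / ρQ u) + φ (ρL u / ρQ u) = φ 1)
    (IK IL IQ : ℝ)
    (hIK : IK = ∫ u, ρK u * W u ∂σ)
    (hIL : IL = ∫ u, ρL u * W u ∂σ)
    (hIQ : IQ = ∫ u, ρQ u * W u ∂σ) :
    (0 < IQ) ∧ (φ 1 ≥ φ (IK / IQ) + φ (IL / IQ) ∧
      (StrictConvexOn ℝ (Set.Ioi 0) φ →
        (φ 1 = φ (IK / IQ) + φ (IL / IQ) ↔
          ∃ c : ℝ, 0 < c ∧ ∀ u, ρK u = c * ρL u))) := by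
  obtain ⟨u₀⟩ := (inferInstance : Nonempty α)
  -- basic data
  have hgc : Continuous (fun u => ρQ u * W u) := hQc.mul hWc
  have hgpos : ∀ u, 0 < ρQ u * W u := fun u => mul_pos (hQpos u) (hWpos u)
  have hgm : Measurable (fun u => (ρQ u * W u).toNNReal) := hgc.measurable.real_toNNReal
  -- integrability of continuous functions
  have integσ : ∀ (h : α → ℝ), Continuous h → Integrable h σ := fun h hh =>
    hh.integrable_of_hasCompactSupport (HasCompactSupport.of_compactSpace h)
  -- weighted measure
  set μ' := σ.withDensity (fun u => (((ρQ u * W u).toNNReal : ℝ≥0) : ℝ≥0∞)) with hμ'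
  have htrans : ∀ (h : α → ℝ), (∫ u, h u ∂μ') = ∫ u, (ρQ u * W u) * h u ∂σ := by
    intro h
    rw [hμ', integral_withDensity_eq_integral_smul hgm h]
    congr 1
    funext u
    rw [NNReal.smul_def, Real.coe_toNNReal _ (hgpos u).le, smul_eq_mul]
  have hIQint : Integrable (fun u => ρQ u * W u) σ := integσ _ hgc
  have htot : μ' Set.univ = ENNReal.ofReal IQ := by
    rw [hμ', withDensity_apply _ MeasurableSet.univ, Measure.restrict_univ, hIQ,
      ofReal_integral_eq_lintegral_ofReal hIQint
        (Filter.Eventually.of_forall fun u => (hgpos u).le)]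
    rfl
  -- positivity of IQ
  have hσuniv : 0 < σ Set.univ := isOpen_univ.measure_pos σ ⟨u₀, trivial⟩
  have hIQpos : 0 < IQ := by
    obtain ⟨um, -, hum⟩ := isCompact_univ.exists_isMinOn ⟨u₀, trivial⟩ hgc.continuousOn
    have hmono : ∫ _u, ρQ um * W um ∂σ ≤ ∫ u, ρQ u * W u ∂σ :=
      integral_mono (integrable_const _) hIQint (fun u => hum (Set.mem_univ u))
    rw [integral_const, smul_eq_mul] at hmono
    have h1 : 0 < σ.real Set.univ := ENNReal.toReal_pos hσuniv.ne' (measure_ne_top _ _)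
    have h2 : 0 < ρQ um * W um := hgpos um
    rw [hIQ]
    nlinarith
  have htotR : μ'.real Set.univ = IQ := by rw [measureReal_def, htot, ENNReal.toReal_ofReal hIQpos.le]
  haveI hμfin : IsFiniteMeasure μ' := ⟨by rw [htot]; exact ENNReal.ofReal_lt_top⟩
  haveI hμne : NeZero μ' := by
    refine ⟨?_⟩
    rw [← Measure.measure_univ_ne_zero, htot]
    simp only [ne_eq, ENNReal.ofReal_eq_zero, not_le]
    exact hIQpos
  have integμ' : ∀ (h : α → ℝ), Continuous h → Integrable h μ' := fun h hh =>
    hh.integrable_of_hasCompactSupport (HasCompactSupport.of_compactSpace h)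
  -- ratio functions
  have hfKc : Continuous (fun u => ρK u / ρQ u) := hKc.div hQc fun u => (hQpos u).ne'
  have hfLc : Continuous (fun u => ρL u / ρQ u) := hLc.div hQc fun u => (hQpos u).ne'
  have hfKpos : ∀ u, 0 < ρK u / ρQ u := fun u => div_pos (hKpos u) (hQpos u)
  have hfLpos : ∀ u, 0 < ρL u / ρQ u := fun u => div_pos (hLpos u) (hQpos u)
  -- averages
  have havg : ∀ (F : α → ℝ), (⨍ u, F u ∂μ') = (∫ u, (ρQ u * W u) * F u ∂σ) / IQ := by
    intro F
    rw [average_eq, htotR, htrans F, smul_eq_mul, inv_mul_eq_div]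
  have hKint : (∫ u, (ρQ u * W u) * (ρK u / ρQ u) ∂σ) = IK := by
    rw [hIK]
    congr 1
    funext u
    field_simp [(hQpos u).ne']
  have hLint : (∫ u, (ρQ u * W u) * (ρL u / ρQ u) ∂σ) = IL := by
    rw [hIL]
    congr 1
    funext u
    field_simp [(hQpos u).ne']
  have havgK : (⨍ u, ρK u / ρQ u ∂μ') = IK / IQ := by rw [havg, hKint]
  have havgL : (⨍ u, ρL u / ρQ u ∂μ') = IL / IQ := by rw [havg, hLint]
  -- continuity of φ on Ioi 0
  have hφcont : ContinuousOn φ (Set.Ioi 0) := ConvexOn.continuousOn isOpen_Ioi hφconv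
  -- Jensen machinery for a positive continuous function
  have jensen : ∀ (F : α → ℝ), Continuous F → (∀ u, 0 < F u) →
      (φ (⨍ u, F u ∂μ') ≤ ⨍ u, φ (F u) ∂μ') ∧
      (StrictConvexOn ℝ (Set.Ioi 0) φ →
        (F =ᵐ[μ'] Function.const α (⨍ u, F u ∂μ') ∨
          φ (⨍ u, F u ∂μ') < ⨍ u, φ (F u) ∂μ')) := by
    intro F hFc hFpos
    obtain ⟨um, -, hum⟩ := isCompact_univ.exists_isMinOn ⟨u₀, trivial⟩ hFc.continuousOn
    obtain ⟨uM, -, huM⟩ := isCompact_univ.exists_isMaxOn ⟨u₀, trivial⟩ hFc.continuousOn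
    set s : Set ℝ := Set.Icc (F um) (F uM) with hs
    have hsub : s ⊆ Ioi 0 := fun x hx => lt_of_lt_of_le (hFpos um) hx.1
    have hsc : IsClosed s := isClosed_Icc
    have hconv : ConvexOn ℝ s φ := hφconv.subset hsub (convex_Icc _ _)
    have hcont : ContinuousOn φ s := hφcont.mono hsub
    have hfs : ∀ᵐ u ∂μ', F u ∈ s :=
      Filter.Eventually.of_forall fun u => ⟨hum (Set.mem_univ u), huM (Set.mem_univ u)⟩
    have hfi : Integrable F μ' := integμ' F hFc
    have hφF : Continuous fun u => φ (F u) :=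
      hφcont.comp_continuous hFc fun u => Set.mem_Ioi.mpr (hFpos u)
    have hgi : Integrable (φ ∘ F) μ' := integμ' _ hφF
    refine ⟨hconv.map_average_le hcont hsc hfs hfi hgi, fun hst => ?_⟩
    exact (hst.subset hsub (convex_Icc _ _)).ae_eq_const_or_map_average_lt hcont hsc hfs hfi hgi
  -- sum of the averages of φ∘F equals φ 1
  have hφK : Continuous fun u => φ (ρK u / ρQ u) :=
    hφcont.comp_continuous hfKc fun u => Set.mem_Ioi.mpr (hfKpos u)
  have hφL : Continuous fun u => φ (ρL u / ρQ u) :=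
    hφcont.comp_continuous hfLc fun u => Set.mem_Ioi.mpr (hfLpos u)
  have hsumavg : (⨍ u, φ (ρK u / ρQ u) ∂μ') + (⨍ u, φ (ρL u / ρQ u) ∂μ') = φ 1 := by
    have h1 : (∫ u, φ (ρK u / ρQ u) ∂μ') + (∫ u, φ (ρL u / ρQ u) ∂μ')
        = ∫ u, (φ (ρK u / ρQ u) + φ (ρL u / ρQ u)) ∂μ' :=
      (integral_add (integμ' _ hφK) (integμ' _ hφL)).symm
    have h2 : (∫ u, (φ (ρK u / ρQ u) + φ (ρL u / ρQ u)) ∂μ') = ∫ _u, φ 1 ∂μ' := by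
      congr 1
      funext u
      exact hsum u
    rw [average_eq, average_eq, htotR, smul_eq_mul, smul_eq_mul, ← mul_add, h1, h2,
      integral_const, htotR, smul_eq_mul]
    field_simp
  obtain ⟨hJK, hJKs⟩ := jensen _ hfKc hfKpos
  obtain ⟨hJL, hJLs⟩ := jensen _ hfLc hfLpos
  rw [havgK] at hJK hJKs
  rw [havgL] at hJL hJLs
  -- the main inequality
  have hineq : φ (IK / IQ) + φ (IL / IQ) ≤ φ 1 := by
    calc φ (IK / IQ) + φ (IL / IQ)
        ≤ (⨍ u, φ (ρK u / ρQ u) ∂μ') + (⨍ u, φ (ρL u / ρQ u) ∂μ') := add_le_add hJK hJL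
      _ = φ 1 := hsumavg
  refine ⟨hIQpos, hineq, fun hst => ⟨fun heq => ?_, fun hdil => ?_⟩⟩
  · -- equality → dilates
    have heK : φ (IK / IQ) = ⨍ u, φ (ρK u / ρQ u) ∂μ' := by linarith
    have heL : φ (IL / IQ) = ⨍ u, φ (ρL u / ρQ u) ∂μ' := by linarith
    have haeK : (fun u => ρK u / ρQ u) =ᵐ[μ'] Function.const α (IK / IQ) := by
      rcases hJKs hst with h | h
      · exact h
      · exact absurd heK (ne_of_lt h)
    have haeL : (fun u => ρL u / ρQ u) =ᵐ[μ'] Function.const α (IL / IQ) := by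
      rcases hJLs hst with h | h
      · exact h
      · exact absurd heL (ne_of_lt h)
    -- transfer a.e. to the unweighted measure and then to everywhere
    have htransae : ∀ (F : α → ℝ) (a : ℝ), Continuous F →
        (F =ᵐ[μ'] Function.const α a) → ∀ u, F u = a := by
      intro F a hFc hae
      have h1 : ∀ᵐ u ∂σ, (((ρQ u * W u).toNNReal : ℝ≥0) : ℝ≥0∞) ≠ 0 → F u = a := by
        rw [← ae_withDensity_iff hgm.coe_nnreal_ennreal]
        exact hae
      have h2 : ∀ᵐ u ∂σ, F u = a := by
        filter_upwards [h1] with u hu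
        apply hu
        simp only [ne_eq, ENNReal.coe_eq_zero, Real.toNNReal_eq_zero, not_le]
        exact hgpos u
      have h3 : F = Function.const α a :=
        (Continuous.ae_eq_iff_eq σ hFc continuous_const).mp h2
      exact fun u => congrFun h3 u
    have hKall : ∀ u, ρK u / ρQ u = IK / IQ := htransae _ _ hfKc haeK
    have hLall : ∀ u, ρL u / ρQ u = IL / IQ := htransae _ _ hfLc haeL
    have haK : 0 < IK / IQ := hKall u₀ ▸ hfKpos u₀
    have haL : 0 < IL / IQ := hLall u₀ ▸ hfLpos u₀
    refine ⟨(IK / IQ) / (IL / IQ), div_pos haK haL, fun u => ?_⟩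
    have h4 : ρK u = (IK / IQ) * ρQ u := by
      have h := hKall u
      rw [div_eq_div_iff (hQpos u).ne' hIQpos.ne'] at h
      field_simp [hIQpos.ne']
      linarith [h]
    have h5 : ρL u = (IL / IQ) * ρQ u := by
      have h := hLall u
      rw [div_eq_div_iff (hQpos u).ne' hIQpos.ne'] at h
      field_simp [hIQpos.ne']
      linarith [h]
    have hILpos : 0 < IL := by
      have hm := mul_pos haL hIQpos
      rwa [div_mul_cancel₀ _ hIQpos.ne'] at hm
    rw [h4, h5]
    field_simp [hIQpos.ne', hILpos.ne']
  · -- dilates → equality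
    obtain ⟨c, hc, hrel⟩ := hdil
    -- the function x ↦ φ (c x) + φ x is strictly decreasing on Ioi 0
    have hh : StrictAntiOn (fun x => φ (c * x) + φ x) (Set.Ioi 0) := by
      intro x hx y hy hxy
      have h1 : φ (c * y) < φ (c * x) :=
        hφanti (Set.mem_Ioi.mpr (mul_pos hc hx)) (Set.mem_Ioi.mpr (mul_pos hc hy))
          (by nlinarith [hx, hxy])
      have h2 : φ y < φ x := hφanti hx hy hxy
      simpa using add_lt_add h1 h2
    -- ρL/ρQ is constant
    have hconst : ∀ u, ρL u / ρQ u = ρL u₀ / ρQ u₀ := by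
      intro u
      apply hh.injOn (Set.mem_Ioi.mpr (hfLpos u)) (Set.mem_Ioi.mpr (hfLpos u₀))
      have e1 : ∀ v, c * (ρL v / ρQ v) = ρK v / ρQ v := by
        intro v
        rw [hrel v]
        ring
      have egoal : φ (c * (ρL u / ρQ u)) + φ (ρL u / ρQ u)
          = φ (c * (ρL u₀ / ρQ u₀)) + φ (ρL u₀ / ρQ u₀) := by
        rw [e1 u, e1 u₀, hsum u, hsum u₀]
      exact egoal
    obtain ⟨t₀, ht₀⟩ : ∃ t₀ : ℝ, t₀ = ρL u₀ / ρQ u₀ := ⟨_, rfl⟩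
    have ht₀pos : 0 < t₀ := ht₀ ▸ hfLpos u₀
    have hLrw : ∀ u, ρL u = t₀ * ρQ u := by
      intro u
      rw [ht₀, ← hconst u, div_mul_cancel₀ _ (hQpos u).ne']
    have hKrw : ∀ u, ρK u = (c * t₀) * ρQ u := by
      intro u
      rw [hrel u, hLrw u]
      ring
    have hIL' : IL = t₀ * IQ := by
      rw [hIL, hIQ]
      rw [show (fun u => ρL u * W u) = fun u => t₀ * (ρQ u * W u) by
        funext u; rw [hLrw u]; ring]
      exact integral_const_mul t₀ _
    have hIK' : IK = (c * t₀) * IQ := by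
      rw [hIK, hIQ]
      rw [show (fun u => ρK u * W u) = fun u => (c * t₀) * (ρQ u * W u) by
        funext u; rw [hKrw u]; ring]
      exact integral_const_mul _ _
    have hIKr : IK / IQ = c * t₀ := by
      rw [hIK', mul_div_assoc, div_self hIQpos.ne', mul_one]
    have hILr : IL / IQ = t₀ := by
      rw [hIL', mul_div_assoc, div_self hIQpos.ne', mul_one]
    rw [hIKr, hILr]
    have h := hsum u₀
    have e : ρK u₀ / ρQ u₀ = c * t₀ := by
      rw [hKrw u₀, mul_div_assoc, div_self (hQpos u₀).ne', mul_one]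
    rw [e] at h
    rw [show ρL u₀ / ρQ u₀ = t₀ from ht₀.symm] at h
    exact h.symm

end AuxOBM

/-- Dual Orlicz–Brunn–Minkowski inequality for the Orlicz harmonic sum `Q = K₁ +̂_φ L₁`:
`φ(1) ≥ φ(Ṽ(K₁,K₂,...,Kₙ)/Ṽ(Q,K₂,...,Kₙ)) + φ(Ṽ(L₁,K₂,...,Kₙ)/Ṽ(Q,K₂,...,Kₙ))`;
if `φ` is strictly convex, equality holds iff `K₁` and `L₁` are dilates.
The star bodies `K₂,...,Kₙ` have radial functions `ρ 2, ..., ρ n`. -/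


theorem dual_orlicz_brunn_minkowski
    (n : ℕ) (hn : 0 < n)
    (φ : ℝ → ℝ)
    (hφconv : ConvexOn ℝ (Ioi 0) φ)
    (hφanti : StrictAntiOn φ (Ioi 0))
    (hφpos : ∀ t ∈ Ioi (0 : ℝ), 0 < φ t)
    (ρK ρL ρQ : sphere (0 : EuclideanSpace ℝ (Fin n)) 1 → ℝ)
    (ρ : ℕ → (sphere (0 : EuclideanSpace ℝ (Fin n)) 1 → ℝ))
    (hKc : Continuous ρK) (hLc : Continuous ρL) (hQc : Continuous ρQ)
    (hKpos : ∀ u, 0 < ρK u) (hLpos : ∀ u, 0 < ρL u) (hQpos : ∀ u, 0 < ρQ u)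
    (hc : ∀ i, 2 ≤ i → i ≤ n → Continuous (ρ i))
    (hpos : ∀ i, 2 ≤ i → i ≤ n → ∀ u, 0 < ρ i u)
    (hsum : ∀ u, φ (ρK u / ρQ u) + φ (ρL u / ρQ u) = φ 1)
    (VtQ VtK VtL : ℝ)
    (hVtQ : VtQ = (1 / n) * ∫ u, ρQ u * ∏ j ∈ Finset.Icc 2 n, ρ j u ∂(sphereσ n))
    (hVtK : VtK = (1 / n) * ∫ u, ρK u * ∏ j ∈ Finset.Icc 2 n, ρ j u ∂(sphereσ n))
    (hVtL : VtL = (1 / n) * ∫ u, ρL u * ∏ j ∈ Finset.Icc 2 n, ρ j u ∂(sphereσ n)) :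
    φ 1 ≥ φ (VtK / VtQ) + φ (VtL / VtQ) ∧
      (StrictConvexOn ℝ (Ioi 0) φ →
        (φ 1 = φ (VtK / VtQ) + φ (VtL / VtQ) ↔
          ∃ c : ℝ, 0 < c ∧ ∀ u, ρK u = c * ρL u)) := by
  haveI hfin : IsFiniteMeasure (sphereσ n) := sphereσ_isFiniteMeasure n hn
  haveI hopen : (sphereσ n).IsOpenPosMeasure := sphereσ_isOpenPos n hn
  haveI hnon : Nonempty (sphere (0 : EuclideanSpace ℝ (Fin n)) 1) := by
    refine ⟨⟨EuclideanSpace.single (⟨0, hn⟩ : Fin n) (1:ℝ), ?_⟩⟩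
    rw [mem_sphere_iff_norm, sub_zero, EuclideanSpace.norm_single]
    norm_num
  have hWc : Continuous (fun u : sphere (0 : EuclideanSpace ℝ (Fin n)) 1 =>
      ∏ j ∈ Finset.Icc 2 n, ρ j u) := by
    apply continuous_finset_prod
    intro j hj
    exact hc j (Finset.mem_Icc.mp hj).1 (Finset.mem_Icc.mp hj).2
  have hWpos : ∀ u, 0 < ∏ j ∈ Finset.Icc 2 n, ρ j u := fun u =>
    Finset.prod_pos fun j hj => hpos j (Finset.mem_Icc.mp hj).1 (Finset.mem_Icc.mp hj).2 u
  obtain ⟨hIQpos, hineq, hiff⟩ := dual_obm_core (sphereσ n) φ hφconv hφanti ρK ρL ρQ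
    (fun u => ∏ j ∈ Finset.Icc 2 n, ρ j u) hKc hLc hQc hWc hKpos hLpos hQpos hWpos hsum
    (∫ u, ρK u * ∏ j ∈ Finset.Icc 2 n, ρ j u ∂(sphereσ n))
    (∫ u, ρL u * ∏ j ∈ Finset.Icc 2 n, ρ j u ∂(sphereσ n))
    (∫ u, ρQ u * ∏ j ∈ Finset.Icc 2 n, ρ j u ∂(sphereσ n)) rfl rfl rfl
  have h1n : ((1:ℝ)/n) ≠ 0 := by
    have : (0:ℝ) < n := by exact_mod_cast hn
    positivity
  have hratK : VtK / VtQ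
      = (∫ u, ρK u * ∏ j ∈ Finset.Icc 2 n, ρ j u ∂(sphereσ n))
        / (∫ u, ρQ u * ∏ j ∈ Finset.Icc 2 n, ρ j u ∂(sphereσ n)) := by
    rw [hVtK, hVtQ, mul_div_mul_left _ _ h1n]
  have hratL : VtL / VtQ
      = (∫ u, ρL u * ∏ j ∈ Finset.Icc 2 n, ρ j u ∂(sphereσ n))
        / (∫ u, ρQ u * ∏ j ∈ Finset.Icc 2 n, ρ j u ∂(sphereσ n)) := by
    rw [hVtL, hVtQ, mul_div_mul_left _ _ h1n]
  rw [hratK, hratL]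
  exact ⟨hineq, hiff⟩
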